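/- For a connected graph G and an integer r ≥ 1, the strong isometric path complexity of G^r is at most (4r² - 2r) times the strong isometric path complexity of G; the same bound holds for isometric path complexity. -/

import Mathlib

open SimpleGraph

variable {V : Type*}

/-- A walk is an isometric path if it is a path and its length equals the distance
between its end-vertices. -/
def IsometricPath (G : SimpleGraph V) {u v : V} (p : G.Walk u v) : Prop :=
  p.IsPath ∧ p.length = G.dist u v

/-- `RootedCover G r k` : the vertices of every isometric path of `G` can be covered by
`k` many `r`-rooted isometric paths of `G`. -/
def RootedCover (G : SimpleGraph V) (r : V) (k : ℕ) : Prop :=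
  ∀ ⦃u v : V⦄ (p : G.Walk u v), IsometricPath G p →
    ∃ Q : Fin k → Σ w : V, G.Walk r w,
      (∀ i, IsometricPath G (Q i).2) ∧
      ∀ x ∈ p.support, ∃ i, x ∈ (Q i).2.support

/-- The isometric path complexity of `G` relative to a root `r`. -/
noncomputable def ipcoR (G : SimpleGraph V) (r : V) : ℕ := sInf {k | RootedCover G r k}

/-- The isometric path complexity of `G`. -/
noncomputable def ipco (G : SimpleGraph V) : ℕ := sInf {k | ∃ r, RootedCover G r k}

/-- The strong isometric path complexity of `G`. -/
noncomputable def sipco (G : SimpleGraph V) : ℕ := sInf {k | ∀ r, RootedCover G r k}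

/-- The `r`-th power of `G`: two distinct vertices are adjacent iff their distance in `G`
is at most `r`. -/
def SimpleGraph.power (G : SimpleGraph V) (r : ℕ) : SimpleGraph V where
  Adj u v := u ≠ v ∧ G.Reachable u v ∧ G.dist u v ≤ r
  symm := ⟨by
    rintro u v ⟨h1, h2, h3⟩
    exact ⟨h1.symm, h2.symm, by rwa [G.dist_comm]⟩⟩
  loopless := ⟨by rintro u ⟨h1, -, -⟩; exact h1 rfl⟩

namespace SipcoAux

variable {G : SimpleGraph V} {u v w : V}

/-- take the first `n` darts of a walk -/
def wtake : {u v : V} → (p : G.Walk u v) → (n : ℕ) → G.Walk u (p.getVert n)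
  | _, _, p, 0 => (Walk.nil' _).copy rfl (p.getVert_zero).symm
  | _, _, .nil, _+1 => .nil
  | _, _, .cons h q, n+1 => .cons h (wtake q n)

lemma length_wtake (p : G.Walk u v) (n : ℕ) : (wtake p n).length = min n p.length := by
  induction p generalizing n with
  | nil => cases n <;> simp [wtake]
  | cons h q ih => cases n <;> simp [wtake, ih, Nat.succ_min_succ]

lemma getVert_wtake (p : G.Walk u v) (n i : ℕ) (h : i ≤ n) :
    (wtake p n).getVert i = p.getVert i := by
  induction p generalizing n i with
  | nil => cases n <;> cases i <;> simp [wtake]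
  | cons hadj q ih =>
    cases n with
    | zero => interval_cases i; simp [wtake]
    | succ n =>
      cases i with
      | zero => simp [wtake]
      | succ i => simpa [wtake] using ih n i (by omega)

lemma length_drop (p : G.Walk u v) (n : ℕ) : (p.drop n).length = p.length - n := by
  induction p generalizing n with
  | nil => cases n <;> simp [Walk.drop]
  | cons h q ih => cases n <;> simp [Walk.drop, ih]

lemma getVert_drop (p : G.Walk u v) (n i : ℕ) : (p.drop n).getVert i = p.getVert (n + i) := by
  induction p generalizing n with
  | nil => cases n <;> simp [Walk.drop, Walk.getVert_of_length_le]
  | cons h q ih =>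
    cases n with
    | zero => simp [Walk.drop]
    | succ n => simpa [Walk.drop, Nat.succ_add] using ih n

lemma isPath_of_length_eq_dist (p : G.Walk u v) (h : p.length = G.dist u v) : p.IsPath := by
  classical
  induction p with
  | nil => simp
  | @cons a b c hadj q ih =>
    rw [Walk.length_cons] at h
    obtain ⟨g, hg⟩ := q.reachable.exists_walk_length_eq_dist
    have h1 : G.dist a c ≤ G.dist b c + 1 := by
      simpa [hg] using SimpleGraph.dist_le (Walk.cons hadj g)
    have h2 : G.dist b c ≤ q.length := SimpleGraph.dist_le q
    have hq : q.length = G.dist b c := by omega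
    rw [Walk.cons_isPath_iff]
    refine ⟨ih hq, fun ha => ?_⟩
    have hd := SimpleGraph.dist_le (q.dropUntil a ha)
    have := Walk.length_dropUntil_le q ha
    omega

lemma iso_iff (p : G.Walk u v) : IsometricPath G p ↔ p.length = G.dist u v :=
  ⟨fun h => h.2, fun h => ⟨isPath_of_length_eq_dist p h, h⟩⟩

lemma dist_getVert {p : G.Walk u v} (h : p.length = G.dist u v) {i : ℕ} (hi : i ≤ p.length) :
    G.dist u (p.getVert i) = i ∧ G.dist (p.getVert i) v = p.length - i := by
  have t1 : G.dist u (p.getVert i) ≤ i := by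
    have := SimpleGraph.dist_le (wtake p i)
    rwa [length_wtake, min_eq_left hi] at this
  have t2 : G.dist (p.getVert i) v ≤ p.length - i := by
    have := SimpleGraph.dist_le (p.drop i)
    rwa [length_drop] at this
  have t3 : p.length ≤ G.dist u (p.getVert i) + G.dist (p.getVert i) v := by
    obtain ⟨g1, hg1⟩ := (wtake p i).reachable.exists_walk_length_eq_dist
    obtain ⟨g2, hg2⟩ := (p.drop i).reachable.exists_walk_length_eq_dist
    have := SimpleGraph.dist_le (g1.append g2)
    rw [Walk.length_append, hg1, hg2] at this
    omega
  omega

lemma drop_isometric {p : G.Walk u v} (h : p.length = G.dist u v) {i : ℕ} (hi : i ≤ p.length) :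
    (p.drop i).length = G.dist (p.getVert i) v := by
  rw [length_drop, (dist_getVert h hi).2]

lemma wtake_isometric {p : G.Walk u v} (h : p.length = G.dist u v) {i : ℕ} (hi : i ≤ p.length) :
    (wtake p i).length = G.dist u (p.getVert i) := by
  rw [length_wtake, min_eq_left hi, (dist_getVert h hi).1]

/-- a set coverable by at most `k` many `ρ`-rooted isometric paths -/
def Covers (G : SimpleGraph V) (ρ : V) (k : ℕ) (S : Set V) : Prop :=
  ∃ L : List (Σ w : V, G.Walk ρ w), L.length ≤ k ∧ (∀ q ∈ L, IsometricPath G q.2) ∧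
    ∀ x ∈ S, ∃ q ∈ L, x ∈ q.2.support

lemma Covers.mono_k {ρ : V} {k k' : ℕ} {S : Set V} (h : k ≤ k') (hc : Covers G ρ k S) :
    Covers G ρ k' S := by
  obtain ⟨L, h1, h2, h3⟩ := hc
  exact ⟨L, h1.trans h, h2, h3⟩

lemma Covers.mono_set {ρ : V} {k : ℕ} {S S' : Set V} (h : S' ⊆ S) (hc : Covers G ρ k S) :
    Covers G ρ k S' := by
  obtain ⟨L, h1, h2, h3⟩ := hc
  exact ⟨L, h1, h2, fun x hx => h3 x (h hx)⟩

lemma Covers.union {ρ : V} {k k' : ℕ} {S S' : Set V} (hc : Covers G ρ k S)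
    (hc' : Covers G ρ k' S') : Covers G ρ (k + k') (S ∪ S') := by
  obtain ⟨L, h1, h2, h3⟩ := hc
  obtain ⟨L', h1', h2', h3'⟩ := hc'
  refine ⟨L ++ L', by simp; omega, by simp_all; tauto, fun x hx => ?_⟩
  rcases hx with hx | hx
  · obtain ⟨q, hq, hq2⟩ := h3 x hx; exact ⟨q, by simp [hq], hq2⟩
  · obtain ⟨q, hq, hq2⟩ := h3' x hx; exact ⟨q, by simp [hq], hq2⟩

lemma covers_comp {ρ : V} {m : ℕ} (T : List (Set V)) (S : Set V)
    (hS : ∀ x ∈ S, ∃ t ∈ T, x ∈ t) (hT : ∀ t ∈ T, Covers G ρ m t) :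
    Covers G ρ (T.length * m) S := by
  classical
  induction T generalizing S with
  | nil => exact ⟨[], by simp, by simp, fun x hx => by simpa using hS x hx⟩
  | cons t T' ih =>
    have hcu : Covers G ρ (m + T'.length * m) ((S ∩ t) ∪ (S \ t)) := by
      refine Covers.union ((hT t (by simp)).mono_set (by intro x hx; exact hx.2)) ?_
      refine ih (S \ t) (fun x hx => ?_) (fun t' ht' => hT t' (by simp [ht']))
      obtain ⟨t', ht', hxt'⟩ := hS x hx.1
      rcases List.mem_cons.mp ht' with h | h
      · exact absurd (h ▸ hxt') hx.2
      · exact ⟨t', h, hxt'⟩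
    have : ((S ∩ t) ∪ (S \ t)) = S := by
      ext x; by_cases hx : x ∈ t <;> simp [hx]
    rw [this] at hcu
    refine hcu.mono_k (by simp [List.length_cons]; ring_nf; omega)

lemma rc_covers {ρ : V} {k : ℕ} (h : RootedCover G ρ k) {u v : V} (p : G.Walk u v)
    (hp : IsometricPath G p) : Covers G ρ k {x | x ∈ p.support} := by
  obtain ⟨Q, hQ1, hQ2⟩ := h p hp
  refine ⟨List.ofFn Q, by simp, ?_, ?_⟩
  · intro q hq
    obtain ⟨i, rfl⟩ := List.mem_ofFn.mp hq
    exact hQ1 i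
  · intro x hx
    obtain ⟨i, hi⟩ := hQ2 x hx
    exact ⟨Q i, List.mem_ofFn.mpr ⟨i, rfl⟩, hi⟩

lemma covers_rc {ρ : V} {k : ℕ}
    (h : ∀ ⦃u v : V⦄ (p : G.Walk u v), IsometricPath G p → Covers G ρ k {x | x ∈ p.support}) :
    RootedCover G ρ k := by
  intro u v p hp
  obtain ⟨L, h1, h2, h3⟩ := h p hp
  refine ⟨fun i => L.getD i ⟨ρ, Walk.nil⟩, fun i => ?_, fun x hx => ?_⟩
  · show IsometricPath G (L.getD (i : ℕ) ⟨ρ, Walk.nil⟩).2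
    by_cases hi : (i : ℕ) < L.length
    · rw [List.getD_eq_getElem L _ hi]
      exact h2 _ (List.getElem_mem hi)
    · rw [List.getD_eq_default L _ (by omega)]
      exact ⟨Walk.IsPath.nil, by simp [SimpleGraph.dist_self]⟩
  · obtain ⟨q, hq, hq2⟩ := h3 x hx
    obtain ⟨i, hi, rfl⟩ := List.mem_iff_getElem.mp hq
    refine ⟨⟨i, lt_of_lt_of_le hi h1⟩, ?_⟩
    show x ∈ (L.getD i ⟨ρ, Walk.nil⟩).2.support
    rwa [List.getD_eq_getElem L _ hi]

section Power

variable {r : ℕ}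

lemma power_walk_reachable {a b : V} (W : (G.power r).Walk a b) : G.Reachable a b := by
  induction W with
  | nil => rfl
  | cons h q ih => exact h.2.1.trans ih

lemma dist_le_r_mul (hG : G.Connected) {a b : V} (W : (G.power r).Walk a b) :
    G.dist a b ≤ r * W.length := by
  induction W with
  | nil => simp
  | @cons a c b h q ih =>
    calc G.dist a b ≤ G.dist a c + G.dist c b := hG.dist_triangle
    _ ≤ r + r * q.length := Nat.add_le_add h.2.2 ih
    _ = r * (q.length + 1) := by ring
    _ = r * (Walk.cons h q).length := by rw [Walk.length_cons]

lemma dist_le_r_mul_powDist (hG : G.Connected) {a b : V} (W : (G.power r).Walk a b) :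
    G.dist a b ≤ r * (G.power r).dist a b := by
  obtain ⟨g, hg⟩ := W.reachable.exists_walk_length_eq_dist
  calc G.dist a b ≤ r * g.length := dist_le_r_mul hG g
  _ = r * (G.power r).dist a b := by rw [hg]

lemma sample_exists (hr : 1 ≤ r) : ∀ (N : ℕ) {u v : V} (p : G.Walk u v), p.length ≤ N →
    p.length = G.dist u v →
    ∃ P : (G.power r).Walk u v, r * P.length ≤ p.length + (r - 1) ∧
      ∀ i, i ≤ p.length → r ∣ i → p.getVert i ∈ P.support := by
  intro N
  induction N with
  | zero =>
    intro u v p hN hd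
    have hlen : p.length = 0 := by omega
    have huv : u = v := by
      have h2 := p.getVert_length
      rw [hlen] at h2
      rw [← h2, p.getVert_zero]
    refine ⟨(Walk.nil' u).copy rfl huv, by simp, fun i hi _ => ?_⟩
    have : i = 0 := by omega
    subst this
    simp [p.getVert_zero]
  | succ N ih =>
    intro u v p hN hd
    by_cases hlen : p.length = 0
    · have huv : u = v := by
        have h2 := p.getVert_length
        rw [hlen] at h2
        rw [← h2, p.getVert_zero]
      refine ⟨(Walk.nil' u).copy rfl huv, by simp, fun i hi _ => ?_⟩
      have : i = 0 := by omega
      subst this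
      simp [p.getVert_zero]
    · by_cases hler : p.length ≤ r
      · have hne : u ≠ v := by
          intro h
          subst h
          rw [SimpleGraph.dist_self] at hd
          omega
        have hadj : (G.power r).Adj u v := ⟨hne, p.reachable, by omega⟩
        refine ⟨Walk.cons hadj Walk.nil, by simp; omega, fun i hi hdvd => ?_⟩
        rcases Nat.eq_zero_or_pos i with h0 | hpos
        · subst h0
          simp [p.getVert_zero]
        · have hri : r ≤ i := Nat.le_of_dvd hpos hdvd
          have : i = p.length := by omega
          subst this
          simp [p.getVert_length]
      · push_neg at hler
        have hrle : r ≤ p.length := le_of_lt hler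
        have hdg := dist_getVert hd hrle
        set x := p.getVert r with hx
        have hq : (p.drop r).length = p.length - r := length_drop p r
        have hqiso : (p.drop r).length = G.dist x v := drop_isometric hd hrle
        obtain ⟨P', hP1, hP2⟩ := ih (p.drop r) (by omega) hqiso
        have hne : u ≠ x := by
          intro h
          rw [← h, SimpleGraph.dist_self] at hdg
          omega
        have hadj : (G.power r).Adj u x :=
          ⟨hne, (wtake p r).reachable, by rw [hdg.1]⟩
        refine ⟨Walk.cons hadj P', by rw [Walk.length_cons, Nat.mul_add, Nat.mul_one]; omega,
          fun i hi hdvd => ?_⟩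
        rcases Nat.eq_zero_or_pos i with h0 | hpos
        · subst h0
          rw [p.getVert_zero]
          simp [Walk.support_cons]
        · have hri : r ≤ i := Nat.le_of_dvd hpos hdvd
          have hmem := hP2 (i - r) (by omega) (by exact Nat.dvd_sub hdvd (dvd_refl r))
          rw [getVert_drop, Nat.add_sub_cancel' hri] at hmem
          simp only [Walk.support_cons, List.mem_cons]
          exact Or.inr hmem

lemma sample_iso (hG : G.Connected) (hr : 1 ≤ r) {u v : V} (p : G.Walk u v)
    (hp : p.length = G.dist u v) :
    ∃ P : (G.power r).Walk u v, IsometricPath (G.power r) P ∧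
      P.length = (G.power r).dist u v ∧
      ∀ i, i ≤ p.length → r ∣ i → p.getVert i ∈ P.support := by
  obtain ⟨P, hP1, hP2⟩ := sample_exists hr p.length p le_rfl hp
  have h1 : (G.power r).dist u v ≤ P.length := SimpleGraph.dist_le P
  have h2 : G.dist u v ≤ r * (G.power r).dist u v := dist_le_r_mul_powDist hG P
  have hlt : r * P.length < r * ((G.power r).dist u v + 1) := by
    rw [Nat.mul_add, Nat.mul_one]; omega
  have h3 : P.length < (G.power r).dist u v + 1 :=
    Nat.lt_of_mul_lt_mul_left hlt
  have heq : P.length = (G.power r).dist u v := by omega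
  exact ⟨P, (iso_iff P).mpr heq, heq, hP2⟩

lemma key_ineq (hG : G.Connected) (hr : 1 ≤ r) {u v : V} (hre : G.Reachable u v) :
    r * (G.power r).dist u v ≤ G.dist u v + (r - 1) := by
  obtain ⟨p, hp⟩ := hre.exists_walk_length_eq_dist
  obtain ⟨P, _, hlen, _⟩ := sample_iso hG hr p hp
  obtain ⟨P', hP1, _⟩ := sample_exists hr p.length p le_rfl hp
  have h1 : (G.power r).dist u v ≤ P'.length := SimpleGraph.dist_le P'
  calc r * (G.power r).dist u v ≤ r * P'.length := Nat.mul_le_mul_left r h1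
  _ ≤ p.length + (r - 1) := hP1
  _ = G.dist u v + (r - 1) := by rw [hp]

end Power

lemma expand_walk (hG : G.Connected) {r : ℕ} {a b : V} (W : (G.power r).Walk a b) :
    ∃ W' : G.Walk a b, W'.length ≤ r * W.length ∧ ∀ x ∈ W.support, x ∈ W'.support := by
  induction W with
  | nil => exact ⟨Walk.nil, by simp, by simp⟩
  | @cons a c b h q ih =>
    obtain ⟨W'', hW1, hW2⟩ := ih
    obtain ⟨g, hg⟩ := h.2.1.exists_walk_length_eq_dist
    refine ⟨g.append W'', ?_, ?_⟩
    · rw [Walk.length_append, hg, Walk.length_cons, Nat.mul_add, Nat.mul_one]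
      have := h.2.2
      omega
    · intro x hx
      rw [Walk.support_cons, List.mem_cons] at hx
      rw [Walk.mem_support_append_iff]
      rcases hx with rfl | hx
      · exact Or.inl g.start_mem_support
      · exact Or.inr (hW2 x hx)

lemma mem_wtake_support {ρ w : V} (W : G.Walk ρ w) {s i : ℕ} (his : i ≤ s)
    (hil : i ≤ W.length) : W.getVert i ∈ (wtake W s).support := by
  rw [Walk.mem_support_iff_exists_getVert]
  refine ⟨i, by rw [getVert_wtake W s i his], ?_⟩
  rw [length_wtake]
  omega

lemma cover_slack (hG : G.Connected) :
    ∀ (N : ℕ) {ρ w : V} (W : G.Walk ρ w), W.length ≤ N → ∀ n, W.length ≤ G.dist ρ w + n →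
      Covers G ρ (n + 1) {x | x ∈ W.support} := by
  classical
  intro N
  induction N with
  | zero =>
    intro ρ w W hN n hn
    have hlen : W.length = 0 := by omega
    refine ⟨[⟨W.getVert 0, wtake W 0⟩], by simp, ?_, ?_⟩
    · intro q hq
      rw [List.mem_singleton] at hq
      subst hq
      refine (iso_iff _).mpr ?_
      simp [length_wtake, W.getVert_zero, SimpleGraph.dist_self]
    · intro x hx
      simp only [Set.mem_setOf_eq, Walk.mem_support_iff_exists_getVert] at hx
      obtain ⟨i, rfl, hi⟩ := hx
      exact ⟨⟨W.getVert 0, wtake W 0⟩, by simp, mem_wtake_support W (by omega) hi⟩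
  | succ N ih =>
    intro ρ w W hN n hn
    set P : ℕ → Prop := fun s => G.dist ρ (W.getVert s) = s with hP
    have hP0 : P 0 := by simp [hP, W.getVert_zero, SimpleGraph.dist_self]
    set s := Nat.findGreatest P W.length with hsdef
    have hs_le : s ≤ W.length := Nat.findGreatest_le _
    have hPs : P s := Nat.findGreatest_spec (Nat.zero_le _) hP0
    have hpiece : IsometricPath G (wtake W s) := by
      refine (iso_iff _).mpr ?_
      rw [length_wtake, min_eq_left hs_le]
      exact hPs.symm
    by_cases hcase : s = W.length
    · refine ⟨[⟨W.getVert s, wtake W s⟩], by simp, ?_, ?_⟩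
      · intro q hq
        rw [List.mem_singleton] at hq
        subst hq
        exact hpiece
      · intro x hx
        simp only [Set.mem_setOf_eq, Walk.mem_support_iff_exists_getVert] at hx
        obtain ⟨i, rfl, hi⟩ := hx
        exact ⟨⟨W.getVert s, wtake W s⟩, by simp, mem_wtake_support W (by omega) hi⟩
    · have hslt : s < W.length := lt_of_le_of_ne hs_le hcase
      have hn1 : 1 ≤ n := by
        by_contra hcon
        have hn0 : n = 0 := by omega
        have hWd : W.length = G.dist ρ w := by
          have := SimpleGraph.dist_le W
          omega
        have hPlen : P W.length := by
          simp only [hP, W.getVert_length]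
          omega
        have h5 : W.length ≤ s := by
          rw [hsdef]
          exact Nat.le_findGreatest (P := P) le_rfl hPlen
        omega
      have hy1 : G.dist ρ (W.getVert (s + 1)) ≤ s + 1 := by
        have := SimpleGraph.dist_le (wtake W (s + 1))
        rwa [length_wtake, min_eq_left (by omega)] at this
      have hy2' : ¬ P (s + 1) := by
        apply Nat.findGreatest_is_greatest (n := W.length) (k := s + 1)
        · rw [← hsdef]; omega
        · omega
      have hy2 : G.dist ρ (W.getVert (s + 1)) ≠ s + 1 := by
        simpa [hP] using hy2'
      obtain ⟨g, hg⟩ := hG.exists_walk_length_eq_dist ρ (W.getVert (s + 1))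
      set W' := g.append (W.drop (s + 1)) with hW'
      have hW'len : W'.length ≤ W.length - 1 := by
        rw [hW', Walk.length_append, hg, length_drop]
        omega
      have hIH := ih W' (by omega) (n - 1) (by
        have := SimpleGraph.dist_le W
        omega)
      obtain ⟨L', hL1, hL2, hL3⟩ := hIH
      refine ⟨⟨W.getVert s, wtake W s⟩ :: L', by simp; omega, ?_, ?_⟩
      · intro q hq
        rcases List.mem_cons.mp hq with rfl | hq
        · exact hpiece
        · exact hL2 q hq
      · intro x hx
        simp only [Set.mem_setOf_eq, Walk.mem_support_iff_exists_getVert] at hx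
        obtain ⟨i, rfl, hi⟩ := hx
        by_cases his : i ≤ s
        · exact ⟨⟨W.getVert s, wtake W s⟩, by simp, mem_wtake_support W his hi⟩
        · have hig : W.getVert i ∈ W'.support := by
            rw [hW', Walk.mem_support_append_iff]
            right
            rw [Walk.mem_support_iff_exists_getVert]
            refine ⟨i - (s + 1), ?_, ?_⟩
            · rw [getVert_drop, Nat.add_sub_cancel' (by omega)]
            · rw [length_drop]; omega
          obtain ⟨q, hq, hq2⟩ := hL3 _ hig
          exact ⟨q, List.mem_cons_of_mem _ hq, hq2⟩

lemma residue_cover (hG : G.Connected) {r : ℕ} (hr : 1 ≤ r) {ρ w : V} (Q : G.Walk ρ w)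
    (hQ : Q.length = G.dist ρ w) :
    Covers (G.power r) ρ r {x | x ∈ Q.support} := by
  classical
  have hclaim : ∀ t : ℕ, 1 ≤ t → t ≤ r →
      ∃ q : Σ w' : V, (G.power r).Walk ρ w', IsometricPath (G.power r) q.2 ∧
        ∀ i, 1 ≤ i → i ≤ Q.length → (i - 1) % r + 1 = t → Q.getVert i ∈ q.2.support := by
    intro t ht1 ht2
    by_cases htl : t ≤ Q.length
    · set j := (Q.length - t) / r with hj
      have hjr : j * r ≤ Q.length - t := Nat.div_mul_le_self _ _
      set D := Q.drop t with hD
      have hDlen : D.length = Q.length - t := length_drop Q t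
      have hDiso : D.length = G.dist (Q.getVert t) w := drop_isometric hQ htl
      have hjD : j * r ≤ D.length := by omega
      set seg := wtake D (j * r) with hseg
      have hseglen : seg.length = j * r := by
        rw [hseg, length_wtake, min_eq_left hjD]
      have hsegiso : seg.length = G.dist (Q.getVert t) (D.getVert (j * r)) :=
        wtake_isometric hDiso hjD
      obtain ⟨P, hPiso, hPdist, hPcov⟩ := sample_iso hG hr seg hsegiso
      have hend : D.getVert (j * r) = Q.getVert (t + j * r) := getVert_drop Q t (j * r)
      have hQend : G.dist ρ (Q.getVert (t + j * r)) = t + j * r :=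
        (dist_getVert hQ (by omega)).1
      have hPj : P.length = j := by
        have h1 : G.dist (Q.getVert t) (D.getVert (j * r)) ≤ r * P.length :=
          dist_le_r_mul hG P
        rw [← hsegiso, hseglen] at h1
        have h2 : j ≤ P.length := by
          have : r * j ≤ r * P.length := by rw [Nat.mul_comm r j]; exact h1
          exact Nat.le_of_mul_le_mul_left this (by omega)
        have h3 : r * (G.power r).dist (Q.getVert t) (D.getVert (j * r)) ≤
            G.dist (Q.getVert t) (D.getVert (j * r)) + (r - 1) :=
          key_ineq hG hr seg.reachable
        rw [← hsegiso, hseglen, ← hPdist] at h3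
        have h4 : r * P.length < r * (j + 1) := by
          rw [Nat.mul_add, Nat.mul_one, Nat.mul_comm r j]
          omega
        have h5 : P.length < j + 1 := Nat.lt_of_mul_lt_mul_left h4
        omega
      have hdt : G.dist ρ (Q.getVert t) = t := (dist_getVert hQ htl).1
      have hne : ρ ≠ Q.getVert t := by
        intro h
        rw [← h, SimpleGraph.dist_self] at hdt
        omega
      have hadj : (G.power r).Adj ρ (Q.getVert t) :=
        ⟨hne, (wtake Q t).reachable, by omega⟩
      set R := Walk.cons hadj P with hR
      have hRlen : R.length = j + 1 := by rw [hR, Walk.length_cons, hPj]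
      have hRiso : IsometricPath (G.power r) R := by
        refine (iso_iff _).mpr ?_
        have h1 : (G.power r).dist ρ (D.getVert (j * r)) ≤ j + 1 := by
          have := SimpleGraph.dist_le R
          omega
        have h2 : G.dist ρ (D.getVert (j * r)) ≤
            r * (G.power r).dist ρ (D.getVert (j * r)) := dist_le_r_mul_powDist hG R
        have hQd : G.dist ρ (D.getVert (j * r)) = t + j * r := by
          rw [hend]; exact hQend
        rw [hQd] at h2
        have h3 : j * r < r * (G.power r).dist ρ (D.getVert (j * r)) := by omega
        have h4 : j < (G.power r).dist ρ (D.getVert (j * r)) :=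
          Nat.lt_of_mul_lt_mul_left (a := r) (by rw [Nat.mul_comm r j]; exact h3)
        omega
      refine ⟨⟨D.getVert (j * r), R⟩, hRiso, fun i hi1 hi2 hmod => ?_⟩
      have hmodle : (i - 1) % r ≤ i - 1 := Nat.mod_le _ _
      have hti : t ≤ i := by omega
      have e1 : (i - 1) % r + r * ((i - 1) / r) = i - 1 := Nat.mod_add_div _ _
      have e2 : i - t = r * ((i - 1) / r) := by omega
      have hdvd : r ∣ (i - t) := ⟨(i - 1) / r, e2⟩
      have hitle : i - t ≤ Q.length - t := by omega
      have e3 : (i - t) / r * r = i - t := Nat.div_mul_cancel hdvd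
      have e4 : i - t ≤ j * r := by
        rw [hj]
        calc i - t = (i - t) / r * r := e3.symm
        _ ≤ (Q.length - t) / r * r := Nat.mul_le_mul_right r (Nat.div_le_div_right hitle)
      have e5 : seg.getVert (i - t) = Q.getVert i := by
        rw [hseg, getVert_wtake D (j * r) (i - t) e4, hD, getVert_drop,
          Nat.add_sub_cancel' hti]
      have := hPcov (i - t) (by omega) hdvd
      rw [e5] at this
      rw [hR, Walk.support_cons]
      exact List.mem_cons_of_mem _ this
    · refine ⟨⟨ρ, Walk.nil⟩, ⟨Walk.IsPath.nil, by simp [SimpleGraph.dist_self]⟩,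
        fun i hi1 hi2 hmod => ?_⟩
      have : (i - 1) % r ≤ i - 1 := Nat.mod_le _ _
      omega
  have hclaim' : ∀ t : Fin r, ∃ q : Σ w' : V, (G.power r).Walk ρ w',
      IsometricPath (G.power r) q.2 ∧
      ∀ i, 1 ≤ i → i ≤ Q.length → (i - 1) % r + 1 = (t : ℕ) + 1 →
        Q.getVert i ∈ q.2.support := by
    intro t
    exact hclaim ((t : ℕ) + 1) (by omega) (by omega)
  choose f hf using hclaim'
  refine ⟨List.ofFn f, by simp, ?_, ?_⟩
  · intro q hq
    obtain ⟨i, rfl⟩ := List.mem_ofFn.mp hq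
    exact (hf i).1
  · intro x hx
    simp only [Set.mem_setOf_eq, Walk.mem_support_iff_exists_getVert] at hx
    obtain ⟨i, rfl, hi⟩ := hx
    rcases Nat.eq_zero_or_pos i with h0 | hpos
    · subst h0
      refine ⟨f ⟨0, by omega⟩, List.mem_ofFn.mpr ⟨_, rfl⟩, ?_⟩
      rw [Q.getVert_zero]
      exact (f ⟨0, by omega⟩).2.start_mem_support
    · set t : Fin r := ⟨(i - 1) % r, Nat.mod_lt _ (by omega)⟩ with ht
      refine ⟨f t, List.mem_ofFn.mpr ⟨_, rfl⟩, ?_⟩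
      exact (hf t).2 i hpos hi rfl

lemma residue_free (hG : G.Connected) {r : ℕ} (hr : 1 ≤ r) {u v : V} (p : G.Walk u v)
    (hp : p.length = G.dist u v) :
    ∃ L : List (Σ a : V, Σ b : V, (G.power r).Walk a b), L.length ≤ r + 1 ∧
      (∀ q ∈ L, IsometricPath (G.power r) q.2.2) ∧
      ∀ x ∈ p.support, ∃ q ∈ L, x ∈ q.2.2.support := by
  classical
  have hclaim : ∀ t : ℕ, t ≤ r →
      ∃ q : Σ a : V, Σ b : V, (G.power r).Walk a b, IsometricPath (G.power r) q.2.2 ∧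
        ∀ i, i ≤ p.length → ((t = 0 ∧ i = 0) ∨ (1 ≤ t ∧ t ≤ i ∧ r ∣ (i - t))) →
          p.getVert i ∈ q.2.2.support := by
    intro t ht
    rcases Nat.eq_zero_or_pos t with rfl | ht1
    · obtain ⟨P, hPiso, _, hPcov⟩ := sample_iso hG hr p hp
      refine ⟨⟨u, v, P⟩, hPiso, fun i hi hcond => ?_⟩
      rcases hcond with ⟨-, rfl⟩ | ⟨h1, -, -⟩
      · exact hPcov 0 (by omega) (dvd_zero r)
      · omega
    · by_cases htl : t ≤ p.length
      · have hDiso : (p.drop t).length = G.dist (p.getVert t) v := drop_isometric hp htl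
        obtain ⟨P, hPiso, _, hPcov⟩ := sample_iso hG hr (p.drop t) hDiso
        refine ⟨⟨p.getVert t, v, P⟩, hPiso, fun i hi hcond => ?_⟩
        rcases hcond with ⟨h0, -⟩ | ⟨-, hti, hdvd⟩
        · omega
        · have hlen : (p.drop t).length = p.length - t := length_drop p t
          have := hPcov (i - t) (by omega) hdvd
          rwa [getVert_drop, Nat.add_sub_cancel' hti] at this
      · refine ⟨⟨u, u, Walk.nil⟩, ⟨Walk.IsPath.nil, by simp [SimpleGraph.dist_self]⟩,
          fun i hi hcond => ?_⟩
        rcases hcond with ⟨h0, -⟩ | ⟨-, hti, -⟩ <;> omega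
  have hclaim' : ∀ t : Fin (r + 1), ∃ q : Σ a : V, Σ b : V, (G.power r).Walk a b,
      IsometricPath (G.power r) q.2.2 ∧
      ∀ i, i ≤ p.length → (((t : ℕ) = 0 ∧ i = 0) ∨ (1 ≤ (t : ℕ) ∧ (t : ℕ) ≤ i ∧
        r ∣ (i - (t : ℕ)))) → p.getVert i ∈ q.2.2.support :=
    fun t => hclaim (t : ℕ) (by omega)
  choose f hf using hclaim'
  refine ⟨List.ofFn f, by simp, ?_, ?_⟩
  · intro q hq
    obtain ⟨i, rfl⟩ := List.mem_ofFn.mp hq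
    exact (hf i).1
  · intro x hx
    rw [Walk.mem_support_iff_exists_getVert] at hx
    obtain ⟨i, rfl, hi⟩ := hx
    rcases Nat.eq_zero_or_pos i with rfl | hpos
    · exact ⟨f ⟨0, by omega⟩, List.mem_ofFn.mpr ⟨_, rfl⟩,
        (hf ⟨0, by omega⟩).2 0 (by omega) (Or.inl ⟨rfl, rfl⟩)⟩
    · set t : Fin (r + 1) := ⟨(i - 1) % r + 1, by
        have := Nat.mod_lt (i - 1) (show 0 < r by omega)
        omega⟩ with htdef
      refine ⟨f t, List.mem_ofFn.mpr ⟨_, rfl⟩, ?_⟩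
      refine (hf t).2 i hi (Or.inr ⟨by simp [htdef], ?_, ?_⟩)
      · have : (i - 1) % r ≤ i - 1 := Nat.mod_le _ _
        simp only [htdef]
        omega
      · have e1 : (i - 1) % r + r * ((i - 1) / r) = i - 1 := Nat.mod_add_div _ _
        refine ⟨(i - 1) / r, ?_⟩
        simp only [htdef]
        omega

lemma forward_rc (hG : G.Connected) {r : ℕ} (hr : 1 ≤ r) {ρ : V} {c : ℕ}
    (hc : RootedCover G ρ c) : RootedCover (G.power r) ρ (r * (c * r)) := by
  apply covers_rc
  intro u v P hP
  obtain ⟨W, hW1, hW2⟩ := expand_walk hG P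
  have hWs : W.length ≤ G.dist u v + ((r - 1) + 0) := by
    have h1 : r * P.length = r * (G.power r).dist u v := by rw [hP.2]
    have h2 := key_ineq hG hr (r := r) (power_walk_reachable P)
    omega
  have hslack : W.length ≤ G.dist u v + (r - 1) := by omega
  obtain ⟨L1, hL1len, hL1iso, hL1cov⟩ :=
    cover_slack hG W.length W le_rfl (r - 1) hslack
  have hL1len' : L1.length ≤ r := by omega
  have hcomp : Covers (G.power r) ρ
      ((L1.map (fun q => {x | x ∈ q.2.support})).length * (c * r)) {x | x ∈ W.support} := by
    refine covers_comp (G := G.power r)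
      (L1.map (fun q => {x | x ∈ q.2.support})) _ ?_ ?_
    · intro x hx
      obtain ⟨q, hq, hq2⟩ := hL1cov x hx
      exact ⟨{y | y ∈ q.2.support}, List.mem_map_of_mem hq, hq2⟩
    · intro tset htset
      obtain ⟨q, hq, rfl⟩ := List.mem_map.mp htset
      have hqiso := hL1iso q hq
      obtain ⟨L2, hL2len, hL2iso, hL2cov⟩ := rc_covers hc q.2 hqiso
      have hinner : Covers (G.power r) ρ
          ((L2.map (fun q2 => {x | x ∈ q2.2.support})).length * r) {x | x ∈ q.2.support} := by
        refine covers_comp (L2.map (fun q2 => {x | x ∈ q2.2.support})) _ ?_ ?_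
        · intro x hx
          obtain ⟨q2, hq2, hq22⟩ := hL2cov x hx
          exact ⟨{y | y ∈ q2.2.support}, List.mem_map_of_mem hq2, hq22⟩
        · intro tset2 htset2
          obtain ⟨q2, hq2, rfl⟩ := List.mem_map.mp htset2
          exact residue_cover hG hr q2.2 (hL2iso q2 hq2).2
      rw [List.length_map] at hinner
      exact hinner.mono_k (Nat.mul_le_mul_right r hL2len)
  rw [List.length_map] at hcomp
  exact ((hcomp.mono_k (Nat.mul_le_mul_right (c * r) hL1len')).mono_set
    (fun x hx => hW2 x hx))

lemma backward_rc (hG : G.Connected) {r : ℕ} (hr : 1 ≤ r) {ρ : V} {k : ℕ}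
    (hk : RootedCover (G.power r) ρ k) : RootedCover G ρ ((r + 1) * (k * r)) := by
  apply covers_rc
  intro u v p hp
  obtain ⟨L0, hL0len, hL0iso, hL0cov⟩ := residue_free hG hr p hp.2
  have hcomp : Covers G ρ
      ((L0.map (fun q => {x | x ∈ q.2.2.support})).length * (k * r)) {x | x ∈ p.support} := by
    refine covers_comp (L0.map (fun q => {x | x ∈ q.2.2.support})) _ ?_ ?_
    · intro x hx
      obtain ⟨q, hq, hq2⟩ := hL0cov x hx
      exact ⟨{y | y ∈ q.2.2.support}, List.mem_map_of_mem hq, hq2⟩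
    · intro tset htset
      obtain ⟨q, hq, rfl⟩ := List.mem_map.mp htset
      have hqiso := hL0iso q hq
      obtain ⟨L2, hL2len, hL2iso, hL2cov⟩ := rc_covers hk q.2.2 hqiso
      have hinner : Covers G ρ
          ((L2.map (fun q2 => {x | x ∈ q2.2.support})).length * r) {x | x ∈ q.2.2.support} := by
        refine covers_comp (L2.map (fun q2 => {x | x ∈ q2.2.support})) _ ?_ ?_
        · intro x hx
          obtain ⟨q2, hq2, hq22⟩ := hL2cov x hx
          exact ⟨{y | y ∈ q2.2.support}, List.mem_map_of_mem hq2, hq22⟩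
        · intro tset2 htset2
          obtain ⟨q2, hq2, rfl⟩ := List.mem_map.mp htset2
          obtain ⟨W2, hW21, hW22⟩ := expand_walk hG q2.2
          have hslack : W2.length ≤ G.dist ρ q2.1 + (r - 1) := by
            have h1 : r * q2.2.length = r * (G.power r).dist ρ q2.1 := by
              rw [(hL2iso q2 hq2).2]
            have h2 := key_ineq hG hr (r := r) (power_walk_reachable q2.2)
            omega
          have hcs := cover_slack hG W2.length W2 le_rfl (r - 1) hslack
          have : ((r - 1) + 1) = r := by omega
          rw [this] at hcs
          exact hcs.mono_set (fun x hx => hW22 x hx)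
      rw [List.length_map] at hinner
      exact hinner.mono_k (Nat.mul_le_mul_right r hL2len)
  rw [List.length_map] at hcomp
  exact hcomp.mono_k (Nat.mul_le_mul_right (k * r) hL0len)

end SipcoAux

/-- for a connected graph `G` and `r ≥ 1`, the (strong) isometric path
complexity of `G^r` is at most `4r² - 2r` times that of `G`. -/
theorem sipco_power_le (G : SimpleGraph V) (hG : G.Connected) (r : ℕ) (hr : 1 ≤ r) :
    sipco (G.power r) ≤ (4 * r ^ 2 - 2 * r) * sipco G ∧
    ipco (G.power r) ≤ (4 * r ^ 2 - 2 * r) * ipco G := by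
  have harith : ∀ c : ℕ, r * (c * r) ≤ (4 * r ^ 2 - 2 * r) * c := by
    intro c
    have hrr : r ≤ r * r := Nat.le_mul_of_pos_left r (by omega)
    have hp : r ^ 2 = r * r := sq r
    have h3 : r * r ≤ 4 * r ^ 2 - 2 * r := by rw [hp]; omega
    calc r * (c * r) = (r * r) * c := by ring
    _ ≤ (4 * r ^ 2 - 2 * r) * c := Nat.mul_le_mul_right c h3
  constructor
  · by_cases hS : {k | ∀ ρ, RootedCover G ρ k}.Nonempty
    · have hmem : ∀ ρ, RootedCover G ρ (sipco G) := Nat.sInf_mem hS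
      have hfwd : ∀ ρ, RootedCover (G.power r) ρ (r * (sipco G * r)) :=
        fun ρ => SipcoAux.forward_rc hG hr (hmem ρ)
      have h1 : sipco (G.power r) ≤ r * (sipco G * r) := Nat.sInf_le hfwd
      exact h1.trans (harith (sipco G))
    · have hempty : {k | ∀ ρ, RootedCover (G.power r) ρ k} = ∅ := by
        rw [Set.eq_empty_iff_forall_notMem]
        intro k hk
        exact hS ⟨(r + 1) * (k * r), fun ρ => SipcoAux.backward_rc hG hr (hk ρ)⟩
      rw [sipco, hempty, Nat.sInf_empty]
      exact Nat.zero_le _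
  · by_cases hS : {k | ∃ ρ, RootedCover G ρ k}.Nonempty
    · obtain ⟨ρ0, hρ0⟩ : ∃ ρ, RootedCover G ρ (ipco G) := Nat.sInf_mem hS
      have hfwd : ∃ ρ, RootedCover (G.power r) ρ (r * (ipco G * r)) :=
        ⟨ρ0, SipcoAux.forward_rc hG hr hρ0⟩
      have h1 : ipco (G.power r) ≤ r * (ipco G * r) := Nat.sInf_le hfwd
      exact h1.trans (harith (ipco G))
    · have hempty : {k | ∃ ρ, RootedCover (G.power r) ρ k} = ∅ := by
        rw [Set.eq_empty_iff_forall_notMem]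
        intro k hk
        obtain ⟨ρ, hρ⟩ := hk
        exact hS ⟨(r + 1) * (k * r), ρ, SipcoAux.backward_rc hG hr hρ⟩
      rw [ipco, hempty, Nat.sInf_empty]
      exact Nat.zero_le _
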